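/- Let A be a Noetherian commutative ring, J ⊆ A an ideal admitting a minimal primary decomposition J = q₁ ∩ ⋯ ∩ q_m, and let p = √q_j be a minimal prime divisor of J. Then there exists h ∈ A \ q_j such that h·p ⊆ J. -/

import Mathlib

theorem stmt_4 {A : Type*} [CommRing A] [IsNoetherianRing A] {m : ℕ}
    (q : Fin m → Ideal A) (J : Ideal A) (hJ : J = ⨅ i, q i)
    (hprim : ∀ i, (q i).IsPrimary)
    (hirred : ∀ j, ¬ (⨅ i ∈ {i | i ≠ j}, q i) ≤ q j)
    (hdist : ∀ i j, i ≠ j → (q i).radical ≠ (q j).radical)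
    (j : Fin m) (p : Ideal A) (hp : p = (q j).radical)
    (hmin : ∀ i, ¬ (q i).radical < p) :
    ∃ h : A, h ∉ q j ∧ ∀ x ∈ p, h * x ∈ J := by
  set Q : Ideal A := ⨅ i ∈ {i | i ≠ j}, q i with hQ
  -- p^n ≤ q j for some n
  obtain ⟨n, hn⟩ : ∃ n, p ^ n ≤ q j := by
    obtain ⟨n, hn⟩ := Ideal.exists_radical_pow_le_of_fg (q j)
      (IsNoetherian.noetherian _)
    exact ⟨n, by rw [hp]; exact hn⟩
  have hS : ∃ k, Q * p ^ k ≤ q j :=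
    ⟨n, le_trans Ideal.mul_le_right hn⟩
  classical
  set k := Nat.find hS with hk
  have hkle : Q * p ^ k ≤ q j := Nat.find_spec hS
  have hkpos : 0 < k := by
    rcases Nat.eq_zero_or_pos k with h0 | h
    · exfalso
      apply hirred j
      have := hkle
      rw [h0, pow_zero, mul_one] at this
      exact this
    · exact h
  have hnotle : ¬ Q * p ^ (k - 1) ≤ q j := Nat.find_min hS (by omega)
  obtain ⟨h, hhQ, hhq⟩ := SetLike.not_le_iff_exists.mp hnotle
  refine ⟨h, hhq, fun x hx => ?_⟩
  rw [hJ, Ideal.mem_iInf]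
  intro i
  by_cases hij : i = j
  · subst hij
    have : h * x ∈ (Q * p ^ (k - 1)) * p := Ideal.mul_mem_mul hhQ hx
    have heq : (Q * p ^ (k - 1)) * p = Q * p ^ k := by
      rw [mul_assoc, ← pow_succ, Nat.sub_add_cancel hkpos]
    rw [heq] at this
    exact hkle this
  · have hQle : Q ≤ q i := by
      refine le_trans ?_ (le_refl (q i))
      exact (biInf_le (fun i => q i) (show i ∈ {i | i ≠ j} from hij))
    exact (q i).mul_mem_right x (hQle (Ideal.mul_le_left hhQ))
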